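/- arXiv:1901.08085 — 3 statements merged into one kernel-verified Lean document; each statement's English description precedes it below -/
import Mathlib

section
/- Let σ₂, r, h₂, K, k be strictly positive real numbers with h₂ − r·k > 0, and set λ := √(2r)/σ₂. Then there exist real numbers c₁ with −h₂/(r·λ) < c₁ < 0 and 0 < U < u such that, defining w(s) := (h₂/r)·s + c₁·exp(λs) + (c₁ + h₂/(r·λ))·exp(−λs), the following hold: w′(U) = k, w′(u) = k, and w(u) = w(U) + K + k·(u − U). -/
set_option maxHeartbeats 2000000

noncomputable def qf (m k p : ℝ) : ℝ := (m*p - (m-k))/((m-k)*p - m)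

noncomputable def Gf (m k lam p : ℝ) : ℝ :=
  (m-k)/lam * (Real.log (qf m k p) - Real.log p)
  + (-m/(lam*(1+p*qf m k p))) * (qf m k p - p)
  + ((-m/(lam*(1+p*qf m k p))) + m/lam) * (1/(qf m k p) - 1/p)

lemma hasDerivAt_w (A B C L M x : ℝ) :
    HasDerivAt (fun s : ℝ => A*s + B*Real.exp (L*s) + C*Real.exp (M*s))
      (A + B*(L*Real.exp (L*x)) + C*(M*Real.exp (M*x))) x := by
  have h1 : HasDerivAt (fun s : ℝ => A*s) A x := by
    simpa using (hasDerivAt_id x).const_mul A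
  have h2 : HasDerivAt (fun s : ℝ => B*Real.exp (L*s)) (B*(L*Real.exp (L*x))) x := by
    have := (((hasDerivAt_id x).const_mul L).exp).const_mul B
    simpa [mul_comm] using this
  have h3 : HasDerivAt (fun s : ℝ => C*Real.exp (M*s)) (C*(M*Real.exp (M*x))) x := by
    have := (((hasDerivAt_id x).const_mul M).exp).const_mul C
    simpa [mul_comm] using this
  exact (h1.add h2).add h3

/-- Main combinatorial/analytic core: existence of `p < q` on the curve
`m(p+q) = (m-k)(1+pq)` with prescribed value gap `K`. -/
lemma key_exists (m k K lam : ℝ) (hk : 0 < k) (hkm : k < m) (hK : 0 < K) (hlam : 0 < lam) :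
    ∃ p q : ℝ, 1 < p ∧ p < q ∧ m*(p+q) = (m-k)*(1+p*q) ∧
      (m-k)/lam * (Real.log q - Real.log p)
        + (-m/(lam*(1+p*q))) * (q - p)
        + ((-m/(lam*(1+p*q))) + m/lam) * (1/q - 1/p) = K := by
  have hd : 0 < m - k := sub_pos.mpr hkm
  have hm : 0 < m := hk.trans hkm
  have hks : (0:ℝ) < k*(2*m-k) := by nlinarith
  set s := Real.sqrt (k*(2*m-k)) with hs_def
  have hs2 : s ^ 2 = k*(2*m-k) := Real.sq_sqrt hks.le
  have hs0 : 0 < s := Real.sqrt_pos.mpr hks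
  have hsk : k < s := by nlinarith [hs2, hs0]
  have hsm : s < m := by nlinarith [hs2, hs0]
  clear_value s
  set P := (m+s)/(m-k) with hP_def
  have hdP : (m-k)*P = m+s := by rw [hP_def, mul_div_cancel₀ _ (ne_of_gt hd)]
  have hP1 : 1 < P := by
    rw [hP_def, lt_div_iff₀ hd]; nlinarith
  have hP0 : 0 < P := by linarith
  clear_value P
  set E := Real.exp ((lam*K + 2*m)/(m-k)) with hE_def
  have hE1 : 1 < E := by
    rw [hE_def, show (1:ℝ) = Real.exp 0 by simp]
    exact Real.exp_lt_exp.mpr (by positivity)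
  have hE0 : 0 < E := by rw [hE_def]; positivity
  have hlogE : Real.log E = (lam*K + 2*m)/(m-k) := by rw [hE_def, Real.log_exp]
  clear_value E
  set Q := P * E with hQ_def
  have hQP : P < Q := by
    rw [hQ_def]; nlinarith
  have hQ0 : 0 < Q := by linarith
  have hdnQ : 0 < (m-k)*Q - m := by nlinarith
  have hlogQ0 : Real.log Q = Real.log P + (lam*K + 2*m)/(m-k) := by
    rw [hQ_def, Real.log_mul (ne_of_gt hP0) (ne_of_gt hE0), hlogE]
  clear_value Q
  set p₁ := (m*Q - (m-k))/((m-k)*Q - m) with hp₁_def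
  clear_value p₁
  have hdn₁eq : (m-k)*p₁ - m = k*(2*m-k)/((m-k)*Q - m) := by
    rw [hp₁_def]; field_simp; ring
  have hdn₁ : 0 < (m-k)*p₁ - m := by rw [hdn₁eq]; positivity
  have hp₁1 : 1 < p₁ := by nlinarith
  have hp₁0 : 0 < p₁ := by linarith
  have hp₁P : p₁ < P := by
    rw [hp₁_def, div_lt_iff₀ hdnQ]
    nlinarith [mul_pos hs0 (sub_pos.mpr hQP), hdP, hs2]
  have hq₁ : qf m k p₁ = Q := by
    rw [qf, div_eq_iff (ne_of_gt (by linarith : (0:ℝ) < (m-k)*p₁ - m))]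
    have hp₁D : p₁ * ((m-k)*Q - m) = m*Q - (m-k) := by
      rw [hp₁_def]; exact div_mul_cancel₀ _ (ne_of_gt hdnQ)
    linear_combination -hp₁D
  -- facts on the interval
  have hIcc : ∀ x ∈ Set.Icc p₁ P, 1 < x ∧ 0 < (m-k)*x - m ∧ 0 < qf m k x ∧ 0 < 1 + x * qf m k x := by
    intro x hx
    obtain ⟨hx1, hx2⟩ := hx
    have h1 : 1 < x := lt_of_lt_of_le hp₁1 hx1
    have h2 : 0 < (m-k)*x - m := by nlinarith [mul_le_mul_of_nonneg_left hx1 hd.le]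
    have h3 : 0 < m*x - (m-k) := by nlinarith [mul_le_mul_of_nonneg_left hx1 hm.le]
    have h4 : 0 < qf m k x := by rw [qf]; exact div_pos h3 h2
    have h5 : 0 < 1 + x * qf m k x := by nlinarith [mul_pos (by linarith : (0:ℝ) < x) h4]
    exact ⟨h1, h2, h4, h5⟩
  have hqc : ContinuousOn (fun x => qf m k x) (Set.Icc p₁ P) := by
    apply ContinuousOn.div (by fun_prop) (by fun_prop)
    intro x hx
    exact ne_of_gt (by linarith [(hIcc x hx).2.1])
  have hGcont : ContinuousOn (Gf m k lam) (Set.Icc p₁ P) := by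
    unfold Gf
    have hden : ∀ x ∈ Set.Icc p₁ P, lam * (1 + x * qf m k x) ≠ 0 := by
      intro x hx
      have := (hIcc x hx).2.2.2
      positivity
    apply ContinuousOn.add
    apply ContinuousOn.add
    · exact continuousOn_const.mul
        ((hqc.log (fun x hx => ne_of_gt (hIcc x hx).2.2.1)).sub
          (ContinuousOn.log continuousOn_id (fun x hx =>
            ne_of_gt (by linarith [(hIcc x hx).1]))))
    · exact (ContinuousOn.div continuousOn_const
        (continuousOn_const.mul (continuousOn_const.add (continuousOn_id.mul hqc))) hden).mul
        (hqc.sub continuousOn_id)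
    · exact ((ContinuousOn.div continuousOn_const
        (continuousOn_const.mul (continuousOn_const.add (continuousOn_id.mul hqc))) hden).add
        continuousOn_const).mul
        ((ContinuousOn.div continuousOn_const hqc
          (fun x hx => ne_of_gt (hIcc x hx).2.2.1)).sub
         (ContinuousOn.div continuousOn_const continuousOn_id (fun x hx =>
            ne_of_gt (by linarith [(hIcc x hx).1]))))
  have hPs : (m-k)*P - m = s := by rw [hdP]; ring
  have hPfix : qf m k P = P := by
    rw [qf, div_eq_iff (by rw [hPs]; exact ne_of_gt hs0)]
    rw [hPs]
    nlinarith [hdP, hs2]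
  have hGP : Gf m k lam P = 0 := by
    rw [Gf, hPfix]; ring
  have hGp₁ : K ≤ Gf m k lam p₁ := by
    rw [Gf, hq₁]
    have hlogQ := hlogQ0
    have hlogp₁ : Real.log p₁ ≤ Real.log P := Real.log_le_log hp₁0 hp₁P.le
    have hT1 : K + m/lam + m/lam ≤ (m-k)/lam * (Real.log Q - Real.log p₁) := by
      have h1 : (lam*K + 2*m)/(m-k) ≤ Real.log Q - Real.log p₁ := by
        rw [hlogQ]; linarith
      have h2 : (m-k)/lam * ((lam*K + 2*m)/(m-k)) = K + m/lam + m/lam := by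
        field_simp; ring
      calc K + m/lam + m/lam = (m-k)/lam * ((lam*K + 2*m)/(m-k)) := h2.symm
        _ ≤ (m-k)/lam * (Real.log Q - Real.log p₁) := by
            apply mul_le_mul_of_nonneg_left h1 (by positivity)
    have hpQ1 : (0:ℝ) < 1 + p₁ * Q := by positivity
    have hT2 : -(m/lam) ≤ (-m/(lam*(1+p₁*Q))) * (Q - p₁) := by
      rw [neg_div, neg_mul, neg_le_neg_iff, div_mul_eq_mul_div, div_le_div_iff₀ (by positivity) hlam]
      have hkey2 : Q - p₁ ≤ 1 + p₁*Q := by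
        nlinarith [mul_le_mul_of_nonneg_right hp₁1.le hQ0.le]
      nlinarith [mul_le_mul_of_nonneg_left hkey2 (mul_pos hm hlam).le]
    have hc3a : (0:ℝ) ≤ (-m/(lam*(1+p₁*Q))) + m/lam := by
      rw [neg_div, neg_add_eq_sub, sub_nonneg, div_le_div_iff₀ (by positivity) hlam]
      nlinarith [mul_pos (mul_pos hm hlam) (mul_pos hp₁0 hQ0)]
    have hc3b : (-m/(lam*(1+p₁*Q))) + m/lam ≤ m/lam := by
      have : -m/(lam*(1+p₁*Q)) ≤ 0 := by
        apply div_nonpos_of_nonpos_of_nonneg (by linarith) (by positivity)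
      linarith
    have hp₁Q : p₁ < Q := lt_trans hp₁P hQP
    have he1 : 1/Q - 1/p₁ ≤ 0 := by
      have : 1/Q ≤ 1/p₁ := one_div_le_one_div_of_le hp₁0 hp₁Q.le
      linarith
    have he2 : -1 ≤ 1/Q - 1/p₁ := by
      have h1 : 1/p₁ ≤ 1 := by
        rw [div_le_one hp₁0]; linarith
      have h2 : 0 < 1/Q := by positivity
      linarith
    have hT3 : -(m/lam) ≤ ((-m/(lam*(1+p₁*Q))) + m/lam) * (1/Q - 1/p₁) := by
      nlinarith
    linarith
  have hmem : K ∈ Set.Icc (Gf m k lam P) (Gf m k lam p₁) := ⟨by rw [hGP]; exact hK.le, hGp₁⟩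
  obtain ⟨p, hpmem, hGpK⟩ := intermediate_value_Icc' hp₁P.le hGcont hmem
  obtain ⟨hpl, hpr⟩ := hpmem
  have hp1 : 1 < p := lt_of_lt_of_le hp₁1 hpl
  have hpP : p < P := by
    rcases lt_or_eq_of_le hpr with h | h
    · exact h
    · exfalso; rw [h, hGP] at hGpK; linarith
  clear hGcont hqc hIcc hmem hq₁ hPfix hGP hGp₁ hdn₁eq hs_def hP_def hE_def hQ_def hp₁_def hlogQ0 hlogE hE1 hE0
  have hdnp : 0 < (m-k)*p - m := by
    nlinarith [mul_le_mul_of_nonneg_left hpl hd.le]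
  have hA : 0 < m + s - (m-k)*p := by
    nlinarith [mul_lt_mul_of_pos_left hpP hd]
  have hB : 0 < (m-k)*p - (m-s) := by
    nlinarith [mul_lt_mul_of_pos_left hp1 hd]
  have h1 : (m - (m-k)*p)^2 < k*(2*m-k) := by
    nlinarith [mul_pos hA hB, hs2]
  obtain ⟨q, hq_def⟩ : ∃ q, q = qf m k p := ⟨_, rfl⟩
  have hqden : q * ((m-k)*p - m) = m*p - (m-k) := by
    rw [hq_def, qf, div_mul_cancel₀ _ (ne_of_gt hdnp)]
  have hpltq : p < q := by
    rw [hq_def, qf, lt_div_iff₀ hdnp]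
    nlinarith [h1, mul_pos hd hd, hd]
  have hstar : m*(p+q) = (m-k)*(1+p*q) := by linear_combination -hqden
  refine ⟨p, q, hp1, hpltq, hstar, ?_⟩
  rw [Gf, ← hq_def] at hGpK
  exact hGpK


/-- Existence of the thresholds (c₁, U, u) for the 'dictator' Nash equilibrium
of the two-player cash management game (eq. NE-2). -/
theorem dictator_NE_thresholds_exist
    (σ₂ r h₂ K k : ℝ)
    (hσ₂ : 0 < σ₂) (hr : 0 < r) (hh₂ : 0 < h₂) (hK : 0 < K) (hk : 0 < k)
    (hkey : 0 < h₂ - r * k) :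
    ∃ c₁ U u : ℝ,
      -(h₂ / (r * (Real.sqrt (2 * r) / σ₂))) < c₁ ∧ c₁ < 0 ∧ 0 < U ∧ U < u ∧
      (let lam : ℝ := Real.sqrt (2 * r) / σ₂
       let w : ℝ → ℝ := fun s =>
         h₂ / r * s + c₁ * Real.exp (lam * s)
           + (c₁ + h₂ / (r * lam)) * Real.exp (-lam * s)
       deriv w U = k ∧ deriv w u = k ∧ w u = w U + K + k * (u - U)) := by
  have hlam : 0 < Real.sqrt (2*r) / σ₂ := by positivity
  set lam : ℝ := Real.sqrt (2 * r) / σ₂ with hlam_def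
  have hm : 0 < h₂ / r := by positivity
  set m : ℝ := h₂ / r with hm_def
  have hkm : k < m := by
    rw [hm_def, lt_div_iff₀ hr]; nlinarith
  clear_value lam m
  obtain ⟨p, q, hp1, hpq, hstar, hG⟩ := key_exists m k K lam hk hkm hK hlam
  have hp0 : 0 < p := by linarith
  have hq1 : 1 < q := by linarith
  have hq0 : 0 < q := by linarith
  have hpq1 : 1 < 1 + p * q := by nlinarith
  have hpq1' : (0:ℝ) < 1 + p * q := by linarith
  set c₁ : ℝ := -m / (lam * (1 + p * q)) with hc₁_def
  set U : ℝ := Real.log p / lam with hU_def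
  set u : ℝ := Real.log q / lam with hu_def
  clear_value c₁ U u
  have hlamne : lam ≠ 0 := ne_of_gt hlam
  have hexpU : Real.exp (lam * U) = p := by
    rw [hU_def, mul_div_cancel₀ _ hlamne, Real.exp_log hp0]
  have hexpu : Real.exp (lam * u) = q := by
    rw [hu_def, mul_div_cancel₀ _ hlamne, Real.exp_log hq0]
  have hexpU' : Real.exp (-lam * U) = p⁻¹ := by
    rw [neg_mul, Real.exp_neg, hexpU]
  have hexpu' : Real.exp (-lam * u) = q⁻¹ := by
    rw [neg_mul, Real.exp_neg, hexpu]
  have hc₁neg : c₁ < 0 := by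
    rw [hc₁_def]
    apply div_neg_of_neg_of_pos (by linarith) (by positivity)
  have hc₁lb : -(m / lam) < c₁ := by
    rw [hc₁_def, neg_div, neg_lt_neg_iff, div_lt_div_iff₀ (by positivity) hlam]
    nlinarith [mul_pos (mul_pos hm hlam) (mul_pos hp0 hq0)]
  have hUpos : 0 < U := by
    rw [hU_def]
    exact div_pos (Real.log_pos hp1) hlam
  have hUu : U < u := by
    rw [hU_def, hu_def]
    exact (div_lt_div_iff_of_pos_right hlam).mpr (Real.log_lt_log hp0 hpq)
  have hrl : h₂ / (r * lam) = m / lam := by rw [hm_def, div_div]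
  refine ⟨c₁, U, u, ?_, hc₁neg, hUpos, hUu, ?_, ?_, ?_⟩
  · rw [← div_div, ← hm_def]
    exact hc₁lb
  · rw [(hasDerivAt_w m c₁ (c₁ + h₂/(r*lam)) lam (-lam) U).deriv, hexpU, hexpU', hrl, hc₁_def]
    field_simp
    linear_combination (-p) * hstar
  · rw [(hasDerivAt_w m c₁ (c₁ + h₂/(r*lam)) lam (-lam) u).deriv, hexpu, hexpu', hrl, hc₁_def]
    field_simp
    linear_combination (-q) * hstar
  · beta_reduce
    rw [hexpu, hexpu', hexpU, hexpU', hrl, hU_def, hu_def]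
    linear_combination hG
end

section
/- Let σ₂, r, h₂, u be strictly positive real numbers, set λ := √(2r)/σ₂, and let c₁, c₂ be real numbers. Define w : ℝ → ℝ by w(s) := (h₂/r)·s + c₁·exp(λs) + c₂·exp(−λs) for s ≥ 0 and w(s) := −(h₂/r)·s + (c₁ + h₂/(r·λ))·exp(λs) + (c₂ − h₂/(r·λ))·exp(−λs) for s < 0. Then: (i) w is differentiable on (−u, u) (in particular the two branches match in value and first derivative at s = 0); and (ii) for every s ∈ (−u, u) with s ≠ 0, w is twice differentiable at s and (σ₂²/2)·w″(s) − r·w(s) + h₂·|s| = 0. -/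
lemma cexp_hasDerivAt (c lam x : ℝ) :
    HasDerivAt (fun s => c * Real.exp (lam * s)) (lam * (c * Real.exp (lam * x))) x := by
  have h1 : HasDerivAt (fun s : ℝ => lam * s) lam x := by
    simpa using (hasDerivAt_id x).const_mul lam
  have h := ((Real.hasDerivAt_exp (lam * x)).comp x h1).const_mul c
  exact h.congr_deriv (by ring)

lemma branch_hasDerivAt (k A B lam x : ℝ) :
    HasDerivAt (fun s => k * s + A * Real.exp (lam * s) + B * Real.exp (-lam * s))
      (k + lam * (A * Real.exp (lam * x)) - lam * (B * Real.exp (-lam * x))) x := by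
  have h := (((hasDerivAt_id x).const_mul k).add (cexp_hasDerivAt A lam x)).add
    (cexp_hasDerivAt B (-lam) x)
  exact h.congr_deriv (by ring)

lemma branch_deriv (k A B lam : ℝ) :
    deriv (fun s => k * s + A * Real.exp (lam * s) + B * Real.exp (-lam * s))
      = fun x => k + lam * (A * Real.exp (lam * x)) - lam * (B * Real.exp (-lam * x)) :=
  funext fun x => (branch_hasDerivAt k A B lam x).deriv

lemma branch_deriv_hasDerivAt (k A B lam x : ℝ) :
    HasDerivAt (deriv (fun s => k * s + A * Real.exp (lam * s) + B * Real.exp (-lam * s)))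
      (lam ^ 2 * (A * Real.exp (lam * x) + B * Real.exp (-lam * x))) x := by
  rw [branch_deriv]
  have h := (((hasDerivAt_const x k).add ((cexp_hasDerivAt A lam x).const_mul lam)).sub
      ((cexp_hasDerivAt B (-lam) x).const_mul lam))
  exact h.congr_deriv (by ring)

/-- The explicit candidate payoff of the two-player cash management game is C¹
across s = 0 and solves the HJB ODE (σ₂²/2)w″ − rw + h₂|s| = 0 in the waiting
region away from s = 0. -/
theorem two_player_candidate_solves_HJB
    (σ₂ r h₂ u : ℝ) (hσ₂ : 0 < σ₂) (hr : 0 < r) (hh₂ : 0 < h₂) (hu : 0 < u)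
    (c₁ c₂ : ℝ) :
    let lam : ℝ := Real.sqrt (2 * r) / σ₂
    let w : ℝ → ℝ := fun s =>
      if 0 ≤ s then
        h₂ / r * s + c₁ * Real.exp (lam * s) + c₂ * Real.exp (-lam * s)
      else
        -(h₂ / r) * s + (c₁ + h₂ / (r * lam)) * Real.exp (lam * s)
          + (c₂ - h₂ / (r * lam)) * Real.exp (-lam * s)
    (∀ s ∈ Set.Ioo (-u) u, DifferentiableAt ℝ w s) ∧
    (∀ s ∈ Set.Ioo (-u) u, s ≠ 0 →
      DifferentiableAt ℝ (deriv w) s ∧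
        σ₂ ^ 2 / 2 * deriv (deriv w) s - r * w s + h₂ * |s| = 0) := by
  intro lam w
  have h2r : (0:ℝ) < 2 * r := by positivity
  have hlam : 0 < lam := div_pos (Real.sqrt_pos.mpr h2r) hσ₂
  have hrne : r ≠ 0 := hr.ne'
  have hlamsq : σ₂ ^ 2 / 2 * lam ^ 2 = r := by
    have hl2 : lam ^ 2 = 2 * r / σ₂ ^ 2 := by
      show (Real.sqrt (2 * r) / σ₂) ^ 2 = _
      rw [div_pow, Real.sq_sqrt h2r.le]
    rw [hl2]
    field_simp
  set a : ℝ := h₂ / (r * lam) with ha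
  have hla : lam * a = h₂ / r := by
    rw [ha]
    field_simp
  -- notation for the two branches
  have hwf : ∀ x : ℝ, 0 ≤ x →
      w x = h₂ / r * x + c₁ * Real.exp (lam * x) + c₂ * Real.exp (-lam * x) :=
    fun x hx => if_pos hx
  have hwg : ∀ x : ℝ, x ≤ 0 →
      w x = -(h₂ / r) * x + (c₁ + a) * Real.exp (lam * x)
        + (c₂ - a) * Real.exp (-lam * x) := by
    intro x hx
    rcases eq_or_lt_of_le hx with h | h
    · subst h
      show (if (0:ℝ) ≤ 0 then _ else _) = _
      rw [if_pos le_rfl]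
      ring
    · exact if_neg (not_le.mpr h)
  have hevf : ∀ s : ℝ, 0 < s → w =ᶠ[nhds s]
      (fun x => h₂ / r * x + c₁ * Real.exp (lam * x) + c₂ * Real.exp (-lam * x)) := by
    intro s hs
    filter_upwards [lt_mem_nhds hs] with x hx
    exact hwf x hx.le
  have hevg : ∀ s : ℝ, s < 0 → w =ᶠ[nhds s]
      (fun x => -(h₂ / r) * x + (c₁ + a) * Real.exp (lam * x)
        + (c₂ - a) * Real.exp (-lam * x)) := by
    intro s hs
    filter_upwards [gt_mem_nhds hs] with x hx
    exact hwg x hx.le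
  constructor
  · intro s _
    rcases lt_trichotomy s 0 with h | h | h
    · exact (hevg s h).differentiableAt_iff.mpr
        (branch_hasDerivAt (-(h₂ / r)) (c₁ + a) (c₂ - a) lam s).differentiableAt
    · subst h
      have h1 : HasDerivWithinAt w
          (h₂ / r + lam * (c₁ * Real.exp (lam * 0)) - lam * (c₂ * Real.exp (-lam * 0)))
          (Set.Ici 0) 0 :=
        ((branch_hasDerivAt (h₂ / r) c₁ c₂ lam 0).hasDerivWithinAt).congr
          (fun y hy => hwf y hy) (hwf 0 le_rfl)
      have h2 : HasDerivWithinAt w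
          (-(h₂ / r) + lam * ((c₁ + a) * Real.exp (lam * 0))
            - lam * ((c₂ - a) * Real.exp (-lam * 0)))
          (Set.Iic 0) 0 :=
        ((branch_hasDerivAt (-(h₂ / r)) (c₁ + a) (c₂ - a) lam 0).hasDerivWithinAt).congr
          (fun y hy => hwg y hy) (hwg 0 le_rfl)
      have heq : -(h₂ / r) + lam * ((c₁ + a) * Real.exp (lam * 0))
            - lam * ((c₂ - a) * Real.exp (-lam * 0))
          = h₂ / r + lam * (c₁ * Real.exp (lam * 0)) - lam * (c₂ * Real.exp (-lam * 0)) := by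
        simp only [mul_zero, neg_mul, neg_zero, Real.exp_zero, mul_one]
        linear_combination (2:ℝ) * hla
      rw [heq] at h2
      have h3 := h1.union h2
      rw [Set.union_comm, Set.Iic_union_Ici] at h3
      exact (hasDerivWithinAt_univ.mp h3).differentiableAt
    · exact (hevf s h).differentiableAt_iff.mpr
        (branch_hasDerivAt (h₂ / r) c₁ c₂ lam s).differentiableAt
  · intro s _ hs0
    have hrh : r * (h₂ / r) = h₂ := by field_simp
    rcases hs0.lt_or_gt with h | h
    · have hdev := (hevg s h).deriv
      refine ⟨hdev.differentiableAt_iff.mpr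
        (branch_deriv_hasDerivAt (-(h₂ / r)) (c₁ + a) (c₂ - a) lam s).differentiableAt, ?_⟩
      rw [hdev.deriv_eq, (branch_deriv_hasDerivAt (-(h₂ / r)) (c₁ + a) (c₂ - a) lam s).deriv,
        hwg s h.le, abs_of_neg h]
      linear_combination ((c₁ + a) * Real.exp (lam * s) + (c₂ - a) * Real.exp (-lam * s)) * hlamsq
        + s * hrh
    · have hdev := (hevf s h).deriv
      refine ⟨hdev.differentiableAt_iff.mpr
        (branch_deriv_hasDerivAt (h₂ / r) c₁ c₂ lam s).differentiableAt, ?_⟩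
      rw [hdev.deriv_eq, (branch_deriv_hasDerivAt (h₂ / r) c₁ c₂ lam s).deriv,
        hwf s h.le, abs_of_pos h]
      linear_combination (c₁ * Real.exp (lam * s) + c₂ * Real.exp (-lam * s)) * hlamsq
        - s * hrh
end

section
/- Let σ, r, h, p be strictly positive real numbers, set λ := √(2r)/σ, let c₁, c₂ be real numbers, and let d < 0 < u be real numbers. Define V : ℝ → ℝ by V(x) := (h/r)·x + c₁·exp(λx) + c₂·exp(−λx) for x ≥ 0 and V(x) := −(p/r)·x + (c₁ + (h+p)/(2rλ))·exp(λx) + (c₂ − (h+p)/(2rλ))·exp(−λx) for x < 0. Then: (i) V is differentiable on (d, u) (the two branches match in value and first derivative at x = 0); and (ii) for every x ∈ (d, u) with x ≠ 0, V is twice differentiable at x and (σ²/2)·V″(x) − r·V(x) + max(h·x, −p·x) = 0. -/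
/-- base function: `a*x + b*exp(l*x) + c*exp(-l*x)` -/
noncomputable def mfgF (a b c l : ℝ) : ℝ → ℝ := fun x =>
  a * x + b * Real.exp (l * x) + c * Real.exp (-l * x)

/-- its derivative -/
noncomputable def mfgF' (a b c l : ℝ) : ℝ → ℝ := fun x =>
  a + b * l * Real.exp (l * x) - c * l * Real.exp (-l * x)

/-- its second derivative -/
noncomputable def mfgF'' (b c l : ℝ) : ℝ → ℝ := fun x =>
  b * l ^ 2 * Real.exp (l * x) + c * l ^ 2 * Real.exp (-l * x)

lemma mfgF_hasDeriv (a b c l x : ℝ) :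
    HasDerivAt (mfgF a b c l) (mfgF' a b c l x) x := by
  have h1 : HasDerivAt (fun x : ℝ => l * x) l x := by
    simpa using (hasDerivAt_id x).const_mul l
  have h3 : HasDerivAt (fun x : ℝ => -l * x) (-l) x := by
    simpa using (hasDerivAt_id x).const_mul (-l)
  have h := (((hasDerivAt_id x).const_mul a).add (h1.exp.const_mul b)).add
    (h3.exp.const_mul c)
  refine h.congr_deriv ?_
  simp [mfgF']; ring

lemma mfgF'_hasDeriv (a b c l x : ℝ) :
    HasDerivAt (mfgF' a b c l) (mfgF'' b c l x) x := by
  have h1 : HasDerivAt (fun x : ℝ => l * x) l x := by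
    simpa using (hasDerivAt_id x).const_mul l
  have h3 : HasDerivAt (fun x : ℝ => -l * x) (-l) x := by
    simpa using (hasDerivAt_id x).const_mul (-l)
  have h := ((hasDerivAt_const x a).add (h1.exp.const_mul (b * l))).sub
    (h3.exp.const_mul (c * l))
  refine h.congr_deriv ?_
  simp [mfgF'']; ring

/-- The explicit candidate payoff of the mean-field cash management game is C¹
across x = 0 and solves the HJB ODE (σ²/2)V″ − rV + max(hx, −px) = 0 in the
continuation region away from x = 0. -/
theorem mfg_candidate_solves_HJB
    (σ r h p : ℝ) (hσ : 0 < σ) (hr : 0 < r) (hh : 0 < h) (hp : 0 < p)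
    (c₁ c₂ d u : ℝ) (hd : d < 0) (hu : 0 < u) :
    let lam : ℝ := Real.sqrt (2 * r) / σ
    let V : ℝ → ℝ := fun x =>
      if 0 ≤ x then
        h / r * x + c₁ * Real.exp (lam * x) + c₂ * Real.exp (-lam * x)
      else
        -(p / r) * x + (c₁ + (h + p) / (2 * r * lam)) * Real.exp (lam * x)
          + (c₂ - (h + p) / (2 * r * lam)) * Real.exp (-lam * x)
    (∀ x ∈ Set.Ioo d u, DifferentiableAt ℝ V x) ∧
    (∀ x ∈ Set.Ioo d u, x ≠ 0 →
      DifferentiableAt ℝ (deriv V) x ∧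
        σ ^ 2 / 2 * deriv (deriv V) x - r * V x + max (h * x) (-p * x) = 0) := by
  intro lam V
  have hrne : r ≠ 0 := ne_of_gt hr
  have hlam : 0 < lam := div_pos (Real.sqrt_pos.2 (by linarith)) hσ
  have hlamne : lam ≠ 0 := ne_of_gt hlam
  have hkey : σ ^ 2 / 2 * lam ^ 2 = r := by
    have hs : Real.sqrt (2 * r) ^ 2 = 2 * r := Real.sq_sqrt (by linarith)
    show σ ^ 2 / 2 * (Real.sqrt (2 * r) / σ) ^ 2 = r
    rw [div_pow, hs]
    field_simp
  set K : ℝ := (h + p) / (2 * r * lam) with hK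
  -- V agrees with the two smooth branches
  have hVf : ∀ y, 0 ≤ y → V y = mfgF (h / r) c₁ c₂ lam y := by
    intro y hy; simp [V, mfgF, hy]
  have hVg : ∀ y, y < 0 → V y = mfgF (-(p / r)) (c₁ + K) (c₂ - K) lam y := by
    intro y hy; simp [V, mfgF, not_le.2 hy, hK]
  -- value and derivative matching at 0
  have hval0 : mfgF (h / r) c₁ c₂ lam 0 = mfgF (-(p / r)) (c₁ + K) (c₂ - K) lam 0 := by
    simp [mfgF]
  have hder0 : mfgF' (h / r) c₁ c₂ lam 0 = mfgF' (-(p / r)) (c₁ + K) (c₂ - K) lam 0 := by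
    simp only [mfgF', mul_zero, neg_zero, Real.exp_zero, mul_one, hK]
    field_simp
    ring
  -- eventual equality away from 0
  have hevf : ∀ x : ℝ, 0 < x → V =ᶠ[nhds x] mfgF (h / r) c₁ c₂ lam := by
    intro x hx
    filter_upwards [Ioi_mem_nhds hx] with y hy using hVf y (le_of_lt hy)
  have hevg : ∀ x : ℝ, x < 0 → V =ᶠ[nhds x] mfgF (-(p / r)) (c₁ + K) (c₂ - K) lam := by
    intro x hx
    filter_upwards [Iio_mem_nhds hx] with y hy using hVg y hy
  constructor
  · -- differentiability
    intro x _
    rcases lt_trichotomy x 0 with hx0 | rfl | hx0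
    · exact (mfgF_hasDeriv _ _ _ lam x).differentiableAt.congr_of_eventuallyEq (hevg x hx0)
    · -- x = 0 : glue the two halves
      have h1 : HasDerivWithinAt V (mfgF' (h / r) c₁ c₂ lam 0) (Set.Ici 0) 0 :=
        ((mfgF_hasDeriv (h / r) c₁ c₂ lam 0).hasDerivWithinAt).congr
          (fun y hy => hVf y hy) (hVf 0 le_rfl)
      have h2 : HasDerivWithinAt V (mfgF' (h / r) c₁ c₂ lam 0) (Set.Iic 0) 0 := by
        have h2' := (mfgF_hasDeriv (-(p / r)) (c₁ + K) (c₂ - K) lam 0).hasDerivWithinAt (s := Set.Iic 0)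
        rw [← hder0] at h2'
        refine h2'.congr ?_ ?_
        · intro y hy
          rcases lt_or_eq_of_le (Set.mem_Iic.mp hy) with hy' | hy'
          · exact hVg y hy'
          · subst hy'; rw [hVf 0 le_rfl, hval0]
        · rw [hVf 0 le_rfl, hval0]
      have h3 := h2.union h1
      rw [Set.Iic_union_Ici] at h3
      exact (hasDerivWithinAt_univ.mp h3).differentiableAt
    · exact (mfgF_hasDeriv _ _ _ lam x).differentiableAt.congr_of_eventuallyEq (hevf x hx0)
  · -- second derivative and ODE away from 0
    intro x _ hne
    rcases hne.lt_or_gt with hx0 | hx0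
    · -- x < 0
      have hev := hevg x hx0
      have hd1 : deriv V =ᶠ[nhds x] mfgF' (-(p / r)) (c₁ + K) (c₂ - K) lam := by
        have := hev.deriv
        rwa [deriv_eq (fun y => mfgF_hasDeriv _ _ _ _ y)] at this
      constructor
      · exact (mfgF'_hasDeriv (-(p / r)) (c₁ + K) (c₂ - K) lam x).differentiableAt.congr_of_eventuallyEq hd1
      · rw [hd1.deriv_eq, (mfgF'_hasDeriv (-(p / r)) (c₁ + K) (c₂ - K) lam x).deriv,
          hVg x hx0, max_eq_right (by nlinarith : h * x ≤ -p * x)]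
        simp only [mfgF, mfgF'']
        have e1 : r * (-(p / r) * x) = -p * x := by field_simp; try ring
        linear_combination
          (((c₁ + K) * Real.exp (lam * x) + (c₂ - K) * Real.exp (-lam * x))) * hkey - e1
    · -- x > 0
      have hev := hevf x hx0
      have hd1 : deriv V =ᶠ[nhds x] mfgF' (h / r) c₁ c₂ lam := by
        have := hev.deriv
        rwa [deriv_eq (fun y => mfgF_hasDeriv _ _ _ _ y)] at this
      constructor
      · exact (mfgF'_hasDeriv (h / r) c₁ c₂ lam x).differentiableAt.congr_of_eventuallyEq hd1
      · rw [hd1.deriv_eq, (mfgF'_hasDeriv (h / r) c₁ c₂ lam x).deriv,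
          hVf x (le_of_lt hx0), max_eq_left (by nlinarith : -p * x ≤ h * x)]
        simp only [mfgF, mfgF'']
        have e1 : r * (h / r * x) = h * x := by field_simp; try ring
        linear_combination
          ((c₁ * Real.exp (lam * x) + c₂ * Real.exp (-lam * x))) * hkey - e1
end
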